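/- Let (I, J) be a pair of distinct-element sequences of the same length s in [n], and let A₁, A₂ ⊆ [s] be sets such that (I_{A₁}, J_{A₁}) and (I_{A₂}, J_{A₂}) are both minimal equal sub-pairs of (I,J). If A₁ ≠ A₂ then A₁ ∩ A₂ = ∅. -/
import Mathlib

/-- `(I_A, J_A)` is a minimal equal sub-pair of `(I, J)`: `I_A = J_A` as sets, while
`I_{A'} ≠ J_{A'}` as sets for every proper nonempty subset `A' ⊊ A`. -/
def MinimalEqualSubPair {n s : ℕ} (I J : Fin s → Fin n) (A : Finset (Fin s)) : Prop :=
  A.Nonempty ∧ A.image I = A.image J ∧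
    ∀ A' ⊂ A, A'.Nonempty → A'.image I ≠ A'.image J

/-- Two distinct sets inducing minimal equal sub-pairs are disjoint. -/
theorem stmt3 {n s : ℕ} (I J : Fin s → Fin n)
    (hI : Function.Injective I) (hJ : Function.Injective J)
    (A₁ A₂ : Finset (Fin s))
    (h₁ : MinimalEqualSubPair I J A₁) (h₂ : MinimalEqualSubPair I J A₂)
    (hne : A₁ ≠ A₂) :
    A₁ ∩ A₂ = ∅ := by
  by_contra h
  have hnonempty : (A₁ ∩ A₂).Nonempty := Finset.nonempty_iff_ne_empty.2 h
  have heq : (A₁ ∩ A₂).image I = (A₁ ∩ A₂).image J := by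
    rw [Finset.image_inter _ _ hI, Finset.image_inter _ _ hJ, h₁.2.1, h₂.2.1]
  rcases eq_or_lt_of_le (Finset.inter_subset_left : A₁ ∩ A₂ ⊆ A₁) with heq1 | hlt
  · -- A₁ ⊆ A₂, so A₁ ⊂ A₂
    have hsub : A₁ ⊆ A₂ := by
      intro x hx
      have : x ∈ A₁ ∩ A₂ := heq1.symm ▸ hx
      exact (Finset.mem_inter.1 this).2
    exact h₂.2.2 A₁ (lt_of_le_of_ne hsub hne) h₁.1 h₁.2.1
  · exact h₁.2.2 _ hlt hnonempty heq
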